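/- Let K ⊆ B_d be a compact subset of the closed unit ball in ℝ^d and n a positive integer such that μ(K ∩ S^{d-1}) < 1/n. Then there exists δ > 0 such that for every set L of at most n points on the unit sphere S^{d-1}, there exists A ∈ O(d) with dist(L, A·K) ≥ δ, where dist denotes the minimum Euclidean distance between a point of L and a point of A·K. -/

import Mathlib

open MeasureTheory Metric Set
open scoped RealInnerProductSpace ENNReal Matrix

namespace Stmt1Aux

variable {d : ℕ}

abbrev G (d : ℕ) := ↥(Matrix.orthogonalGroup (Fin d) ℝ)

local notation "E" => EuclideanSpace ℝ (Fin d)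

instance : ContinuousInv (G d) := by
  constructor
  apply continuous_induced_rng.2
  have h : ∀ g : G d, ((g⁻¹ : G d) : Matrix (Fin d) (Fin d) ℝ) = star (g : Matrix (Fin d) (Fin d) ℝ) := by
    intro g; rw [← Unitary.star_eq_inv, Unitary.coe_star]
  exact (continuous_star.comp continuous_subtype_val).congr (fun g => (h g).symm)

instance : IsTopologicalGroup (G d) := ⟨⟩

set_option maxHeartbeats 1000000 in
theorem isCompact_og :
    IsCompact ((Matrix.orthogonalGroup (Fin d) ℝ : Set (Matrix (Fin d) (Fin d) ℝ))) := by
  have hsub : (Matrix.orthogonalGroup (Fin d) ℝ : Set (Matrix (Fin d) (Fin d) ℝ)) ⊆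
      Set.univ.pi (fun _ : Fin d => Set.univ.pi fun _ : Fin d => Icc (-1 : ℝ) 1) := by
    intro A hA i _ j _
    have := entry_norm_bound_of_unitary (𝕜 := ℝ) hA i j
    rw [Real.norm_eq_abs, abs_le] at this
    exact this
  have hcompact : IsCompact (Set.univ.pi
      (fun _ : Fin d => Set.univ.pi fun _ : Fin d => Icc (-1 : ℝ) 1) :
      Set (Matrix (Fin d) (Fin d) ℝ)) :=
    isCompact_univ_pi fun _ => isCompact_univ_pi fun _ => isCompact_Icc
  refine IsCompact.of_isClosed_subset hcompact ?_ hsub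
  have h : (Matrix.orthogonalGroup (Fin d) ℝ : Set (Matrix (Fin d) (Fin d) ℝ)) =
      (fun A : Matrix (Fin d) (Fin d) ℝ => (star A * A, A * star A)) ⁻¹'
        {((1 : Matrix (Fin d) (Fin d) ℝ), (1 : Matrix (Fin d) (Fin d) ℝ))} := by
    ext A
    simp only [mem_preimage, mem_singleton_iff, Prod.mk.injEq]
    exact Unitary.mem_iff
  rw [h]
  exact IsClosed.preimage
    (Continuous.prodMk (continuous_star.mul continuous_id) (continuous_id.mul continuous_star))
    isClosed_singleton

instance : CompactSpace (G d) := isCompact_iff_compactSpace.1 isCompact_og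

instance matSC : SecondCountableTopology (Matrix (Fin d) (Fin d) ℝ) :=
  inferInstanceAs (SecondCountableTopology (Fin d → Fin d → ℝ))

instance : SecondCountableTopology (G d) :=
  TopologicalSpace.Subtype.secondCountableTopology _

instance : MeasurableSpace (G d) := borel _
instance : BorelSpace (G d) := ⟨rfl⟩

noncomputable def K0 (d : ℕ) : TopologicalSpace.PositiveCompacts (G d) :=
  ⟨⟨univ, isCompact_univ⟩, by simp⟩

noncomputable abbrev ν (d : ℕ) : Measure (G d) := Measure.haarMeasure (K0 d)

instance : IsProbabilityMeasure (ν d) :=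
  ⟨by rw [show (univ : Set (G d)) = ↑(K0 d) from rfl, ν, Measure.haarMeasure_self]⟩

theorem nu_right_invariant (B : G d) {T : Set (G d)} (hT : MeasurableSet T) :
    ν d ((fun A => A * B) ⁻¹' T) = ν d T := by
  have h1 : MeasurePreserving (fun A : G d => B * A) (ν d) (ν d) :=
    measurePreserving_mul_left (ν d) B
  have h2 : MeasurePreserving (fun A : G d => (MulAut.conj B⁻¹) A) (ν d) (ν d) :=
    MonoidHom.measurePreserving (f := (MulAut.conj B⁻¹).toMonoidHom)
      (by
        show Continuous fun A : G d => B⁻¹ * A * B⁻¹⁻¹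
        fun_prop)
      (MulAut.conj B⁻¹).surjective rfl
  have h3 : MeasurePreserving (fun A : G d => A * B) (ν d) (ν d) := by
    have h : (fun A : G d => A * B)
        = (fun A : G d => B * A) ∘ (fun A : G d => (MulAut.conj B⁻¹) A) := by
      funext A
      simp [MulAut.conj_apply, mul_assoc]
    rw [h]
    exact h1.comp h2
  exact h3.measure_preimage hT.nullMeasurableSet

theorem te_mul (M N : Matrix (Fin d) (Fin d) ℝ) (x : E) :
    Matrix.toEuclideanLin (M * N) x = Matrix.toEuclideanLin M (Matrix.toEuclideanLin N x) := by
  simp [Matrix.toEuclideanLin_apply, Matrix.mulVec_mulVec]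

theorem te_one (x : E) : Matrix.toEuclideanLin (1 : Matrix (Fin d) (Fin d) ℝ) x = x := by
  simp [Matrix.toEuclideanLin_apply, Matrix.one_mulVec]

theorem norm_te {A : Matrix (Fin d) (Fin d) ℝ} (hA : A ∈ Matrix.orthogonalGroup (Fin d) ℝ)
    (x : E) : ‖Matrix.toEuclideanLin A x‖ = ‖x‖ := by
  have h1 : star A * A = 1 := Unitary.star_mul_self_of_mem hA
  have h2 : ⟪Matrix.toEuclideanLin A x, Matrix.toEuclideanLin A x⟫ = ⟪x, x⟫ := by
    rw [← LinearMap.adjoint_inner_right,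
      show LinearMap.adjoint (Matrix.toEuclideanLin A) = Matrix.toEuclideanLin (star A) from
        (Matrix.toEuclideanLin_conjTranspose_eq_adjoint A).symm,
      ← te_mul, h1, te_one]
  rw [← Real.sqrt_sq (norm_nonneg ((Matrix.toEuclideanLin A) x)), ← Real.sqrt_sq (norm_nonneg x),
    ← real_inner_self_eq_norm_sq, ← real_inner_self_eq_norm_sq, h2]

theorem continuous_te : Continuous (fun p : G d × E =>
    Matrix.toEuclideanLin (p.1 : Matrix (Fin d) (Fin d) ℝ) p.2) := by
  have he : ∀ p : G d × E,
      Matrix.toEuclideanLin (p.1 : Matrix (Fin d) (Fin d) ℝ) p.2 =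
      (WithLp.equiv 2 (Fin d → ℝ)).symm
        ((p.1 : Matrix (Fin d) (Fin d) ℝ) *ᵥ (WithLp.equiv 2 (Fin d → ℝ)) p.2) := by
    intro p; rw [Matrix.toEuclideanLin_apply]; rfl
  refine Continuous.congr ?_ (fun p => (he p).symm)
  exact (PiLp.continuous_toLp 2 (fun _ : Fin d => ℝ)).comp
    ((Continuous.matrix_mulVec (continuous_subtype_val.comp continuous_fst)
      ((PiLp.continuous_ofLp 2 (fun _ : Fin d => ℝ)).comp continuous_snd)))

set_option maxHeartbeats 1000000 in
theorem continuous_te_fixed (x : E) :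
    Continuous (fun A : G d => Matrix.toEuclideanLin (A : Matrix (Fin d) (Fin d) ℝ) x) := by
  have h : (fun A : G d => Matrix.toEuclideanLin (A : Matrix (Fin d) (Fin d) ℝ) x)
      = (fun p : G d × E => Matrix.toEuclideanLin (p.1 : Matrix (Fin d) (Fin d) ℝ) p.2)
        ∘ (fun A : G d => (A, x)) := rfl
  rw [h]
  exact continuous_te.comp (continuous_id.prodMk continuous_const)

theorem exists_rot_of_mem_sphere {x y : E} (hx : x ∈ sphere (0:E) 1) (hy : y ∈ sphere (0:E) 1) :
    ∃ B ∈ Matrix.orthogonalGroup (Fin d) ℝ, Matrix.toEuclideanLin B x = y := by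
  by_cases hxy : x = y
  · exact ⟨1, Submonoid.one_mem _, by rw [te_one, hxy]⟩
  · have hnx : ‖x‖ = ‖y‖ := by
      rw [mem_sphere_zero_iff_norm] at hx hy; rw [hx, hy]
    set R := (Submodule.reflection ((ℝ ∙ (x - y))ᗮ) : E ≃ₗᵢ[ℝ] E) with hR
    have hRx : R x = y := Submodule.reflection_sub hnx
    set B := Matrix.toEuclideanLin.symm (R.toLinearEquiv.toLinearMap) with hB
    have hteB : Matrix.toEuclideanLin B = R.toLinearEquiv.toLinearMap :=
      Matrix.toEuclideanLin.apply_symm_apply _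
    have hmem : B ∈ Matrix.orthogonalGroup (Fin d) ℝ := by
      rw [Matrix.mem_unitaryGroup_iff']
      apply Matrix.toEuclideanLin.injective
      apply LinearMap.ext
      intro v
      rw [te_mul, te_one,
        show Matrix.toEuclideanLin (star B) = LinearMap.adjoint (Matrix.toEuclideanLin B) from
          Matrix.toEuclideanLin_conjTranspose_eq_adjoint B]
      apply ext_inner_right ℝ
      intro w
      rw [LinearMap.adjoint_inner_left, hteB]
      exact R.inner_map_map v w
    exact ⟨B, hmem, by rw [hteB]; exact hRx⟩

theorem exists_good_rot (n : ℕ) (hn : 0 < n)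
    (μ : Measure E) [IsProbabilityMeasure μ]
    (hsph : μ (sphere (0 : E) 1) = 1)
    (hinv : ∀ A ∈ Matrix.orthogonalGroup (Fin d) ℝ, μ.map (Matrix.toEuclideanLin A) = μ)
    (S : Set E) (hScompact : IsCompact S) (hSsph : S ⊆ sphere (0:E) 1)
    (hμS : μ S < 1 / n)
    (x : Fin n → E) (hx : ∀ i, x i ∈ sphere (0:E) 1) :
    ∃ C : G d, ∀ i, Matrix.toEuclideanLin (C : Matrix (Fin d) (Fin d) ℝ) (x i) ∉ S := by
  have hS : MeasurableSet S := hScompact.isClosed.measurableSet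
  have hsph_ne : (sphere (0:E) 1).Nonempty := by
    rcases eq_empty_or_nonempty (sphere (0:E) 1) with h | h
    · exfalso; rw [h] at hsph; simp at hsph
    · exact h
  set bad : E → Set (G d) :=
    fun x => {A : G d | Matrix.toEuclideanLin (A : Matrix (Fin d) (Fin d) ℝ) x ∈ S} with hbad
  have hbad_meas : ∀ x : E, MeasurableSet (bad x) := fun x => (continuous_te_fixed x).measurable hS
  have hconst : ∀ y ∈ sphere (0:E) 1, ∀ z ∈ sphere (0:E) 1, ν d (bad y) = ν d (bad z) := by
    intro y hy z hz
    obtain ⟨B, hB, hBz⟩ := exists_rot_of_mem_sphere hy hz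
    have h : bad z = (fun A : G d => A * ⟨B, hB⟩) ⁻¹' (bad y) := by
      ext A
      simp only [hbad, mem_preimage, mem_setOf_eq]
      rw [show ((A * (⟨B, hB⟩ : G d) : G d) : Matrix (Fin d) (Fin d) ℝ)
          = (A : Matrix (Fin d) (Fin d) ℝ) * B from rfl, te_mul, hBz]
    rw [h, nu_right_invariant _ (hbad_meas y)]
  set U : Set (G d × E) :=
    {p | Matrix.toEuclideanLin ((p.1 : Matrix (Fin d) (Fin d) ℝ)) p.2 ∈ S} with hUdef
  have hU : MeasurableSet U := continuous_te.measurable hS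
  have h1 : (ν d).prod μ U = μ S := by
    rw [Measure.prod_apply hU]
    have h : ∀ A : G d, μ (Prod.mk A ⁻¹' U) = μ S := by
      intro A
      have hmA : Measurable (Matrix.toEuclideanLin (A : Matrix (Fin d) (Fin d) ℝ) : E → E) :=
        (Matrix.toEuclideanLin
          (A : Matrix (Fin d) (Fin d) ℝ)).continuous_of_finiteDimensional.measurable
      calc μ (Prod.mk A ⁻¹' U)
          = μ ((Matrix.toEuclideanLin (A : Matrix (Fin d) (Fin d) ℝ)) ⁻¹' S) := rfl
        _ = μ.map (Matrix.toEuclideanLin (A : Matrix (Fin d) (Fin d) ℝ)) S :=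
            (Measure.map_apply hmA hS).symm
        _ = μ S := by rw [hinv _ A.2]
    simp_rw [h]
    rw [lintegral_const, measure_univ, mul_one]
  have h2 : (ν d).prod μ U = ∫⁻ y, ν d (bad y) ∂μ := Measure.prod_apply_symm hU
  obtain ⟨x₀, hx₀⟩ := hsph_ne
  have h3 : ∫⁻ y, ν d (bad y) ∂μ = ν d (bad x₀) := by
    have hae : (fun y => ν d (bad y)) =ᵐ[μ] fun _ => ν d (bad x₀) := by
      have hsphm : ∀ᵐ y ∂μ, y ∈ sphere (0:E) 1 := by
        rw [ae_iff]
        have : {y : E | ¬ y ∈ sphere (0:E) 1} = (sphere (0:E) 1)ᶜ := rfl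
        rw [this, measure_compl isClosed_sphere.measurableSet (measure_ne_top μ _), hsph, measure_univ]
        simp
      filter_upwards [hsphm] with y hy
      exact hconst y hy x₀ hx₀
    rw [lintegral_congr_ae hae, lintegral_const, measure_univ, mul_one]
  have key : ∀ y ∈ sphere (0:E) 1, ν d (bad y) = μ S := by
    intro y hy
    rw [hconst y hy x₀ hx₀, ← h3, ← h2, h1]
  have hntop : (n : ℝ≥0∞) ≠ ⊤ := ENNReal.natCast_ne_top n
  have hnzero : (n : ℝ≥0∞) ≠ 0 := Nat.cast_ne_zero.2 hn.ne'
  have hlt : ν d (⋃ i, bad (x i)) < 1 := by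
    calc ν d (⋃ i, bad (x i)) ≤ ∑' i, ν d (bad (x i)) := measure_iUnion_le _
    _ = ∑ i : Fin n, ν d (bad (x i)) := tsum_fintype _
    _ = n * μ S := by
        have h : ∀ i : Fin n, ν d (bad (x i)) = μ S := fun i => key _ (hx i)
        simp [h, Finset.sum_const, mul_comm]
    _ < n * (1 / n) := by
        exact (ENNReal.mul_lt_mul_iff_right hnzero hntop).2 hμS
    _ = 1 := by
        rw [one_div, ENNReal.mul_inv_cancel hnzero hntop]
  have hne : (⋃ i, bad (x i)) ≠ univ := by
    intro h
    rw [h, measure_univ] at hlt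
    exact lt_irrefl _ hlt
  have : ∃ C : G d, C ∉ ⋃ i, bad (x i) := by
    by_contra h
    push_neg at h
    exact hne (eq_univ_of_forall h)
  obtain ⟨C, hC⟩ := this
  exact ⟨C, fun i hmem => hC (mem_iUnion.2 ⟨i, hmem⟩)⟩


theorem per_tuple (n : ℕ) (hn : 0 < n)
    (μ : Measure E) [IsProbabilityMeasure μ]
    (hsph : μ (sphere (0 : E) 1) = 1)
    (hinv : ∀ A ∈ Matrix.orthogonalGroup (Fin d) ℝ, μ.map (Matrix.toEuclideanLin A) = μ)
    (K : Set E) (hKc : IsCompact K)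
    (hμK : μ (K ∩ sphere (0 : E) 1) < 1 / n)
    (x : Fin n → E) (hx : ∀ i, x i ∈ sphere (0:E) 1) :
    ∃ A ε, A ∈ Matrix.orthogonalGroup (Fin d) ℝ ∧ 0 < ε ∧
      ∀ i, ∀ y ∈ K, ε ≤ dist (x i) (Matrix.toEuclideanLin A y) := by
  have hScompact : IsCompact (K ∩ sphere (0:E) 1) := hKc.inter_right isClosed_sphere
  obtain ⟨C, hC⟩ := exists_good_rot n hn μ hsph hinv (K ∩ sphere (0:E) 1) hScompact
    inter_subset_right hμK x hx
  set A := star (C : Matrix (Fin d) (Fin d) ℝ) with hA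
  have hAmem : A ∈ Matrix.orthogonalGroup (Fin d) ℝ := Unitary.star_mem C.2
  have havoid : ∀ i, ∀ y ∈ K, Matrix.toEuclideanLin A y ≠ x i := by
    intro i y hy h
    have h2 : Matrix.toEuclideanLin (C : Matrix (Fin d) (Fin d) ℝ) (x i) = y := by
      rw [← h, ← te_mul, Unitary.mul_star_self_of_mem C.2, te_one]
    apply hC i
    rw [h2]
    refine ⟨hy, ?_⟩
    rw [mem_sphere_zero_iff_norm, ← h2, norm_te C.2, ← mem_sphere_zero_iff_norm]
    exact hx i
  rcases K.eq_empty_or_nonempty with hKe | hKne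
  · exact ⟨A, 1, hAmem, one_pos, fun i y hy => absurd hy (by rw [hKe]; exact notMem_empty y)⟩
  · set Im := (fun y => Matrix.toEuclideanLin A y) '' K with hIm
    have hImc : IsCompact Im :=
      hKc.image (Matrix.toEuclideanLin A).continuous_of_finiteDimensional
    have hImne : Im.Nonempty := hKne.image _
    have hpos : ∀ i, 0 < infDist (x i) Im := by
      intro i
      rw [← hImc.isClosed.notMem_iff_infDist_pos hImne]
      rintro ⟨y, hy, hyx⟩
      exact havoid i y hy hyx
    haveI : Nonempty (Fin n) := Fin.pos_iff_nonempty.mp hn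
    refine ⟨A, Finset.univ.inf' Finset.univ_nonempty (fun i => infDist (x i) Im), hAmem, ?_, ?_⟩
    · rw [Finset.lt_inf'_iff]
      exact fun i _ => hpos i
    · intro i y hy
      exact le_trans (Finset.inf'_le _ (Finset.mem_univ i))
        (infDist_le_dist_of_mem ⟨y, hy, rfl⟩)

end Stmt1Aux

open Stmt1Aux in
/-- For compact K ⊆ B_d with μ(K ∩ S^{d-1}) < 1/n there is δ > 0 such that
for every set L of at most n points on the sphere, some A ∈ O(d) has dist(L, A·K) ≥ δ. -/
theorem stmt1 (d n : ℕ) (hn : 0 < n)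
    (μ : Measure (EuclideanSpace ℝ (Fin d))) [IsProbabilityMeasure μ]
    (hsph : μ (sphere (0 : EuclideanSpace ℝ (Fin d)) 1) = 1)
    (hinv : ∀ A ∈ Matrix.orthogonalGroup (Fin d) ℝ,
      μ.map (Matrix.toEuclideanLin A) = μ)
    (K : Set (EuclideanSpace ℝ (Fin d))) (hKc : IsCompact K)
    (hKB : K ⊆ closedBall (0 : EuclideanSpace ℝ (Fin d)) 1)
    (hμK : μ (K ∩ sphere (0 : EuclideanSpace ℝ (Fin d)) 1) < 1 / n) :
    ∃ δ : ℝ, 0 < δ ∧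
      ∀ L : Finset (EuclideanSpace ℝ (Fin d)), L.card ≤ n →
        (↑L ⊆ sphere (0 : EuclideanSpace ℝ (Fin d)) 1) →
        ∃ A ∈ Matrix.orthogonalGroup (Fin d) ℝ,
          ∀ x ∈ L, ∀ y ∈ K, δ ≤ dist x (Matrix.toEuclideanLin A y) := by
  classical
  have hsph_ne : (sphere (0 : EuclideanSpace ℝ (Fin d)) 1).Nonempty := by
    rcases eq_empty_or_nonempty (sphere (0 : EuclideanSpace ℝ (Fin d)) 1) with h | h
    · exfalso; rw [h] at hsph; simp at hsph
    · exact h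
  obtain ⟨x₀, hx₀⟩ := hsph_ne
  set T : Set (Fin n → EuclideanSpace ℝ (Fin d)) :=
    Set.univ.pi (fun _ => sphere (0 : EuclideanSpace ℝ (Fin d)) 1) with hT
  have hTc : IsCompact T := isCompact_univ_pi fun _ => isCompact_sphere _ _
  have per : ∀ x : Fin n → EuclideanSpace ℝ (Fin d), x ∈ T →
      ∃ A ε, A ∈ Matrix.orthogonalGroup (Fin d) ℝ ∧ 0 < ε ∧
      ∀ i, ∀ y ∈ K, ε ≤ dist (x i) (Matrix.toEuclideanLin A y) := by
    intro x hxT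
    exact per_tuple n hn μ hsph hinv K hKc hμK x (fun i => hxT i (mem_univ i))
  choose A ε hAmem hεpos hprop using per
  set V : ↥T → Set (Fin n → EuclideanSpace ℝ (Fin d)) :=
    fun z => {y | ∀ i, dist (y i) (z.1 i) < ε z.1 z.2 / 2} with hV
  have hVopen : ∀ z, IsOpen (V z) := by
    intro z
    have h : V z = ⋂ i, (fun y : Fin n → EuclideanSpace ℝ (Fin d) => y i) ⁻¹'
        ball (z.1 i) (ε z.1 z.2 / 2) := by
      ext y
      simp [hV, mem_ball]
    rw [h]
    exact isOpen_iInter_of_finite fun i => (continuous_apply i).isOpen_preimage _ isOpen_ball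
  have hcover : T ⊆ ⋃ z : ↥T, V z := by
    intro y hy
    exact mem_iUnion.2 ⟨⟨y, hy⟩, fun i => by simpa [dist_self] using half_pos (hεpos y hy)⟩
  obtain ⟨t, ht⟩ := hTc.elim_finite_subcover V hVopen hcover
  have hx0T : (fun _ : Fin n => x₀) ∈ T := fun i _ => hx₀
  have htne : t.Nonempty := by
    obtain ⟨z, hz, -⟩ := mem_iUnion₂.1 (ht hx0T)
    exact ⟨z, hz⟩
  refine ⟨t.inf' htne (fun z => ε z.1 z.2 / 2), ?_, ?_⟩
  · rw [Finset.lt_inf'_iff]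
    exact fun z _ => half_pos (hεpos z.1 z.2)
  · intro L hLcard hLsph
    rcases L.eq_empty_or_nonempty with hLe | ⟨l₀, hl₀⟩
    · refine ⟨1, Submonoid.one_mem _, ?_⟩
      intro p hp
      rw [hLe] at hp
      exact absurd hp (Finset.notMem_empty p)
    · set e := L.equivFin with he
      set xx : Fin n → EuclideanSpace ℝ (Fin d) :=
        fun i => if h : (i : ℕ) < L.card then ((e.symm ⟨(i : ℕ), h⟩ : L) : EuclideanSpace ℝ (Fin d)) else l₀
        with hxx
      have hxxL : ∀ i, xx i ∈ L := by
        intro i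
        by_cases h : (i : ℕ) < L.card
        · simp only [hxx, dif_pos h]
          exact (e.symm ⟨(i : ℕ), h⟩).2
        · simp only [hxx, dif_neg h]
          exact hl₀
      have hxxT : xx ∈ T := fun i _ => hLsph (hxxL i)
      obtain ⟨z, hzt, hzV⟩ := mem_iUnion₂.1 (ht hxxT)
      refine ⟨A z.1 z.2, hAmem z.1 z.2, ?_⟩
      intro p hp y hy
      obtain ⟨i, hxi⟩ : ∃ i : Fin n, xx i = p := by
        set k := e ⟨p, hp⟩ with hk
        have hklt : (k : ℕ) < L.card := k.2
        refine ⟨⟨(k : ℕ), lt_of_lt_of_le hklt hLcard⟩, ?_⟩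
        have hmk : (⟨(k : ℕ), hklt⟩ : Fin L.card) = k := by
          apply Fin.ext; rfl
        simp only [hxx, dif_pos hklt]
        rw [hmk, hk, Equiv.symm_apply_apply]
      have h1 : dist (xx i) (z.1 i) < ε z.1 z.2 / 2 := hzV i
      have h2 : ε z.1 z.2 ≤ dist (z.1 i) (Matrix.toEuclideanLin (A z.1 z.2) y) :=
        hprop z.1 z.2 i y hy
      have hδ : t.inf' htne (fun z => ε z.1 z.2 / 2) ≤ ε z.1 z.2 / 2 := Finset.inf'_le _ hzt
      have htri := dist_triangle (z.1 i) (xx i) (Matrix.toEuclideanLin (A z.1 z.2) y)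
      have h1' : dist (z.1 i) (xx i) < ε z.1 z.2 / 2 := by rw [dist_comm]; exact h1
      rw [← hxi]
      linarith
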